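/- Let (λ, ρ, s) be a homothetic datum on a ring R and define a ⋄ b = a·b + ρ(a) + λ(b) + s. Then ⋄ is commutative (a ⋄ b = b ⋄ a for all a, b ∈ R) if and only if R is commutative and λ = ρ. -/
import Mathlib


/-- The homothetic truss multiplication `a ⋄ b = a·b + ρ(a) + λ(b) + s` is
commutative iff `R` is commutative and `λ = ρ`. -/
theorem homothetic_truss_comm_iff {R : Type*} [NonUnitalRing R]
    (lam rho : R →+ R) (s : R)
    (hlam : ∀ a b : R, lam (a * b) = lam a * b)
    (hrho : ∀ a b : R, rho (a * b) = a * rho b)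
    (hmid : ∀ a b : R, a * lam b = rho a * b)
    (hperm : ∀ a : R, rho (lam a) = lam (rho a))
    (hs : lam s = rho s)
    (hll : ∀ a : R, lam (lam a) = lam a + s * a)
    (hrr : ∀ a : R, rho (rho a) = rho a + a * s) :
    (∀ a b : R, a * b + rho a + lam b + s = b * a + rho b + lam a + s)
      ↔ ((∀ a b : R, a * b = b * a) ∧ ∀ a : R, lam a = rho a) := by
  constructor
  · intro h
    have heq : ∀ a : R, lam a = rho a := by
      intro a
      have := h a 0
      simpa using this.symm
    refine ⟨fun a b => ?_, heq⟩
    have := h a b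
    rw [heq a, heq b] at this
    have h2 : a * b + (rho a + rho b + s) = b * a + (rho a + rho b + s) := by
      calc a * b + (rho a + rho b + s) = a * b + rho a + rho b + s := by abel
        _ = b * a + rho b + rho a + s := this
        _ = b * a + (rho a + rho b + s) := by abel
    exact add_right_cancel h2
  · rintro ⟨hc, he⟩ a b
    rw [hc a b, he a, he b]
    abel
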